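/- arXiv:0909.2314 — 3 statements merged into one kernel-verified Lean document; each statement's English description precedes it below -/
import Mathlib

section
/- Let n ≡ 0 or 1 (mod 4) and let α ∈ S_n be a permutation such that αG = complement of G for some self-complementary graph G on {1,...,n}. Then α has at most one fixed point, and every cycle of α of length at least 2 has length divisible by 4. -/
set_option linter.unusedVariables false

/-- The position `p_{ij}` of the pair `{i,j}` (1-based labels `i<j` in `{1,...,n}`),
namely `(2n-i)(i-1)/2 + (j-i)`, expressed on `Sym2 (Fin n)` (vertex `a : Fin n`
carries the label `a+1`). -/
def pairIndex (n : Nat) (e : Sym2 (Fin n)) : Nat :=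
  Sym2.lift ⟨fun a b =>
      (2 * n - (min a.val b.val + 1)) * (min a.val b.val) / 2
        + (max a.val b.val - min a.val b.val),
    fun a b => by simp [min_comm, max_comm]⟩ e

open scoped Classical in
/-- The index `N(G) = Σ_{ij ∈ E(G)} 2^(λ - p_ij)` of a labelled graph, `λ = C(n,2)`. -/
noncomputable def graphIndex (n : Nat) (G : SimpleGraph (Fin n)) : Nat :=
  ∑ e ∈ G.edgeSet.toFinset, 2 ^ (n.choose 2 - pairIndex n e)

/-- The pair permutation `α'` induced on `Sym2 (Fin n)` by `α'{i,j} = {αi,αj}`. -/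
def pairPerm {n : Nat} (α : Equiv.Perm (Fin n)) : Equiv.Perm (Sym2 (Fin n)) where
  toFun := Sym2.map α
  invFun := Sym2.map α.symm
  left_inv e := by induction e using Sym2.ind with | _ a b => simp
  right_inv e := by induction e using Sym2.ind with | _ a b => simp

/-- The relabelled graph `αG`, whose edge set is `{{αi,αj} : {i,j} ∈ E(G)}`. -/
def mapGraph {n : Nat} (α : Equiv.Perm (Fin n)) (G : SimpleGraph (Fin n)) :
    SimpleGraph (Fin n) where
  Adj a b := G.Adj (α.symm a) (α.symm b)
  symm := ⟨fun a b h => G.symm.symm _ _ h⟩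
  loopless := ⟨fun a h => G.loopless.irrefl _ h⟩

private lemma adj_step {n : Nat} (α : Equiv.Perm (Fin n)) (G : SimpleGraph (Fin n))
    (h : mapGraph α G = Gᶜ) {x y : Fin n} (hxy : x ≠ y) :
    G.Adj (α x) (α y) ↔ ¬ G.Adj x y := by
  have h' : (mapGraph α G).Adj (α x) (α y) ↔ Gᶜ.Adj (α x) (α y) := by rw [h]
  simp only [mapGraph, SimpleGraph.compl_adj, Equiv.symm_apply_apply] at h'
  have hne : α x ≠ α y := fun hc => hxy (α.injective hc)
  constructor
  · intro hadj
    intro hG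
    exact (h'.mp hG).2 hadj
  · intro hn
    by_contra hc
    exact hn (h'.mpr ⟨hne, hc⟩)

private lemma adj_pow {n : Nat} (α : Equiv.Perm (Fin n)) (G : SimpleGraph (Fin n))
    (h : mapGraph α G = Gᶜ) {x y : Fin n} (hxy : x ≠ y) (k : ℕ) :
    G.Adj ((α ^ k) x) ((α ^ k) y) ↔ (G.Adj x y ↔ Even k) := by
  induction k with
  | zero => simp
  | succ k ih =>
    have hne : (α ^ k) x ≠ (α ^ k) y := fun hc => hxy ((α ^ k).injective hc)
    have e1 : (α ^ (k+1)) x = α ((α ^ k) x) := by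
      rw [pow_succ', Equiv.Perm.mul_apply]
    have e2 : (α ^ (k+1)) y = α ((α ^ k) y) := by
      rw [pow_succ', Equiv.Perm.mul_apply]
    rw [e1, e2, adj_step α G h hne, ih, Nat.even_add_one]
    tauto

/-- If `n ≡ 0,1 (mod 4)` and `αG = Gᶜ` for some self-complementary graph `G`,
then `α` has at most one fixed point and every cycle of `α` of length `≥ 2`
has length divisible by `4`. -/
theorem stmt10 (n : Nat) (hn : n % 4 = 0 ∨ n % 4 = 1) (α : Equiv.Perm (Fin n))
    (hG : ∃ G : SimpleGraph (Fin n), mapGraph α G = Gᶜ) :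
    {x : Fin n | α x = x}.Subsingleton ∧
      ∀ x : Fin n, α x ≠ x → 4 ∣ (α.cycleOf x).support.card := by
  obtain ⟨G, hGc⟩ := hG
  -- key: no odd k with a pair {x,y}, x≠y, preserved setwise by α^k
  have key : ∀ (k : ℕ), Odd k → ∀ x y : Fin n, x ≠ y →
      ¬ (((α ^ k) x = x ∧ (α ^ k) y = y) ∨ ((α ^ k) x = y ∧ (α ^ k) y = x)) := by
    intro k hk x y hxy hcase
    have hpow := adj_pow α G hGc hxy k
    have hodd : ¬ Even k := Nat.not_even_iff_odd.mpr hk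
    rcases hcase with ⟨h1, h2⟩ | ⟨h1, h2⟩
    · rw [h1, h2] at hpow
      tauto
    · rw [h1, h2] at hpow
      have := G.adj_comm y x
      tauto
  constructor
  · intro x hx y hy
    by_contra hxy
    exact absurd (Or.inl ⟨hx, hy⟩) (key 1 odd_one x y hxy)
  · intro x hx
    set m := (α.cycleOf x).support.card with hm
    have hcyc : (α.cycleOf x).IsCycle := Equiv.Perm.isCycle_cycleOf α hx
    have hcx : (α.cycleOf x) x = α x := Equiv.Perm.cycleOf_apply_self α x
    have hcx' : (α.cycleOf x) x ≠ x := by rw [hcx]; exact hx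
    have hord : orderOf (α.cycleOf x) = m := hcyc.orderOf
    have hmx : (α ^ m) x = x := by
      rw [← Equiv.Perm.cycleOf_pow_apply_self α x m, ← hord, pow_orderOf_eq_one]
      rfl
    have hmin : ∀ t : ℕ, (α ^ t) x = x → m ∣ t := by
      intro t ht
      have : ((α.cycleOf x) ^ t) x = x := by
        rw [Equiv.Perm.cycleOf_pow_apply_self]; exact ht
      have h1 : (α.cycleOf x) ^ t = 1 := (hcyc.pow_eq_one_iff' hcx').mpr this
      rw [← hord]
      exact orderOf_dvd_of_pow_eq_one h1
    have hm2 : 2 ≤ m := hcyc.two_le_card_support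
    by_contra h4
    rcases Nat.even_or_odd m with hme | hmo
    · -- m = 2t, t odd
      obtain ⟨t, ht⟩ := hme
      have httwo : m = 2 * t := by omega
      have hto : Odd t := by
        rcases Nat.even_or_odd t with ⟨s, hs⟩ | h
        · exact absurd ⟨s, by omega⟩ h4
        · exact h
      have htpos : 0 < t := by omega
      have hy : (α ^ t) x ≠ x := by
        intro hc
        have := hmin t hc
        have := Nat.le_of_dvd htpos this
        omega
      refine key t hto x ((α ^ t) x) (fun hc => hy hc.symm) (Or.inr ⟨rfl, ?_⟩)
      rw [← Equiv.Perm.mul_apply, ← pow_add, show t + t = m by omega]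
      exact hmx
    · -- m odd : use pair {x, α x}
      have hax : α x ≠ x := hx
      have h1 : (α ^ m) (α x) = α x := by
        rw [← Equiv.Perm.mul_apply, ← pow_succ, pow_succ', Equiv.Perm.mul_apply, hmx]
      exact key m hmo x (α x) (fun hc => hx hc.symm) (Or.inl ⟨hmx, h1⟩)
end

section
/- Let n ≡ 0 or 1 (mod 4) with n ≥ 4, and let α ∈ S_n be a permutation with at most one fixed point such that every cycle of α of length at least 2 has length divisible by 4. Then there exists a self-complementary graph G on {1,...,n} with αG = complement of G. -/
set_option linter.unusedVariables false

open Equiv Equiv.Perm Finset in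
/-- A general parity lemma: if every element of a `σ`-invariant region lies in a
cycle of even length, then the region can be 2-colored alternately along `σ`. -/
theorem exists_alternating_bool {β : Type*} [Fintype β] [DecidableEq β]
    (σ : Equiv.Perm β) (S : Set β)
    (h : ∀ x ∈ S, σ x ≠ x ∧ Even ((σ.cycleOf x).support.card)) :
    ∃ f : β → Bool, ∀ x ∈ S, f (σ x) = ! f x := by
  classical
  letI sd : Setoid β := ⟨σ.SameCycle,
    ⟨fun x => SameCycle.refl σ x, SameCycle.symm, SameCycle.trans⟩⟩
  set r : β → β := fun x => (Quotient.mk sd x).out with hr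
  have hrc : ∀ x, σ.SameCycle (r x) x := by
    intro x
    have : (Quotient.mk sd (r x)) = Quotient.mk sd x := by
      simp [hr, Quotient.out_eq]
    exact Quotient.exact this
  have hex : ∀ x, ∃ j : ℕ, (σ ^ j) (r x) = x := by
    intro x
    obtain ⟨i, _, hi⟩ := (hrc x).exists_pow_eq'
    exact ⟨i, hi⟩
  set d : β → ℕ := fun x => Nat.find (hex x) with hd
  refine ⟨fun x => decide (d x % 2 = 1), ?_⟩
  intro x hx
  obtain ⟨hσx, hm⟩ := h x hx
  set s : Finset β := (σ.cycleOf x).support with hs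
  have hxs : x ∈ s := by
    rw [hs, mem_support_cycleOf_iff' hσx]
  have hrs : r x ∈ s := by
    rw [hs, mem_support_cycleOf_iff' hσx]
    exact (hrc x).symm
  have hrσ : r (σ x) = r x := by
    have : (Quotient.mk sd (σ x)) = Quotient.mk sd x :=
      Quotient.sound (SameCycle.symm ⟨1, by simp⟩)
    simp [hr, this]
  have h1 : (σ ^ (d x)) (r x) = x := Nat.find_spec (hex x)
  have h2 : (σ ^ (d (σ x))) (r x) = σ x := by
    rw [← hrσ]; exact Nat.find_spec (hex (σ x))
  have h3 : (σ ^ (d x + 1)) (r x) = σ x := by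
    rw [pow_succ' σ (d x)]
    simp [Equiv.Perm.mul_apply, h1]
  have hco := σ.isCycleOn_support_cycleOf x
  have hmod : d (σ x) ≡ d x + 1 [MOD s.card] := by
    rw [← hco.pow_apply_eq_pow_apply hrs]
    rw [h2, h3]
  have h2dvd : 2 ∣ s.card := hm.two_dvd
  have hmod2 : d (σ x) % 2 = (d x + 1) % 2 := Nat.ModEq.of_dvd h2dvd hmod
  rcases Nat.mod_two_eq_zero_or_one (d x) with h0 | h0 <;>
    · simp only [h0] at hmod2 ⊢
      rw [Nat.add_mod, h0] at hmod2
      simp [hmod2]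

open Equiv Equiv.Perm Finset in
theorem pairPerm_pow_apply {n : Nat} (α : Equiv.Perm (Fin n)) (k : ℕ) (a b : Fin n) :
    ((pairPerm α) ^ k) s(a, b) = s((α ^ k) a, (α ^ k) b) := by
  induction k with
  | zero => simp
  | succ k ih =>
    rw [pow_succ' (pairPerm α) k, pow_succ' α k]
    simp only [Equiv.Perm.mul_apply, ih]
    rfl

open Equiv Equiv.Perm Finset in
theorem period_dvd_iff {n : Nat} (α : Equiv.Perm (Fin n)) {a : Fin n} (ha : α a ≠ a)
    (k : ℕ) : (α ^ k) a = a ↔ (α.cycleOf a).support.card ∣ k := by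
  have has : a ∈ (α.cycleOf a).support := by
    rw [mem_support_cycleOf_iff' ha]
  exact (α.isCycleOn_support_cycleOf a).pow_apply_eq has

/-- If `n ≡ 0,1 (mod 4)`, `n ≥ 4`, and `α` has at most one fixed point with all
cycles of length `≥ 2` of length divisible by `4`, then there is a self-complementary
graph `G` on `{1,...,n}` with `αG = Gᶜ`. -/
theorem stmt11 (n : Nat) (hn : n % 4 = 0 ∨ n % 4 = 1) (hn4 : 4 ≤ n)
    (α : Equiv.Perm (Fin n))
    (hfix : {x : Fin n | α x = x}.Subsingleton)
    (hcyc : ∀ x : Fin n, α x ≠ x → 4 ∣ (α.cycleOf x).support.card) :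
    ∃ G : SimpleGraph (Fin n), mapGraph α G = Gᶜ := by
  classical
  set σ := pairPerm α with hσ
  -- every nondiagonal pair is moved by σ
  have hmove : ∀ a b : Fin n, a ≠ b → σ s(a, b) ≠ s(a, b) := by
    intro a b hab heq
    have : s(α a, α b) = s(a, b) := heq
    rw [Sym2.eq_iff] at this
    rcases this with ⟨h1, h2⟩ | ⟨h1, h2⟩
    · exact hab (hfix h1 h2)
    · have ha : α a ≠ a := fun h => hab (by rw [← h1, h])
      have h2a : (α ^ 2) a = a := by
        rw [pow_two]; simp [Equiv.Perm.mul_apply, h1, h2]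
      have hdvd := (period_dvd_iff α ha 2).mp h2a
      have h4 := hcyc a ha
      have hpos : 0 < (α.cycleOf a).support.card := by
        rw [Finset.card_pos]
        exact ⟨a, by rw [Equiv.Perm.mem_support_cycleOf_iff' ha]⟩
      have := Nat.le_of_dvd (by norm_num) hdvd
      omega
  -- every nondiagonal pair lies in an even σ-cycle
  have heven : ∀ e ∈ {e : Sym2 (Fin n) | ¬ e.IsDiag}, σ e ≠ e ∧
      Even ((σ.cycleOf e).support.card) := by
    intro e he
    induction e using Sym2.ind with | _ a b =>
    have hab : a ≠ b := by simpa [Sym2.mk_isDiag_iff] using he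
    have hσe : σ s(a, b) ≠ s(a, b) := hmove a b hab
    refine ⟨hσe, ?_⟩
    set m := (σ.cycleOf s(a, b)).support.card with hm
    have hes : s(a, b) ∈ (σ.cycleOf s(a, b)).support := by
      rw [Equiv.Perm.mem_support_cycleOf_iff' hσe]
    have hmper : (σ ^ m) s(a, b) = s(a, b) :=
      (σ.isCycleOn_support_cycleOf s(a, b)).pow_card_apply hes
    rw [pairPerm_pow_apply] at hmper
    rw [Sym2.eq_iff] at hmper
    rcases hmper with ⟨h1, h2⟩ | ⟨h1, h2⟩
    · by_cases ha : α a = a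
      · have hb : α b ≠ b := fun h => hab (hfix ha h)
        have := (period_dvd_iff α hb m).mp h2
        obtain ⟨c, hc⟩ := (hcyc b hb).trans this
        exact ⟨2 * c, by omega⟩
      · have := (period_dvd_iff α ha m).mp h1
        obtain ⟨c, hc⟩ := (hcyc a ha).trans this
        exact ⟨2 * c, by omega⟩
    · have ha : α a ≠ a := by
        intro h
        apply hab
        have : (α ^ m) a = a := by
          clear h1 h2; induction m with
          | zero => simp
          | succ k ih => rw [pow_succ' α k]; simp [Equiv.Perm.mul_apply, h, ih]
        rw [this] at h1; exact h1
      have h2m : (α ^ (2 * m)) a = a := by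
        rw [two_mul, pow_add]
        simp [Equiv.Perm.mul_apply, h1, h2]
      have := (period_dvd_iff α ha (2 * m)).mp h2m
      obtain ⟨c, hc⟩ := (hcyc a ha).trans this
      exact ⟨c, by omega⟩
  obtain ⟨f, hf⟩ := exists_alternating_bool σ {e : Sym2 (Fin n) | ¬ e.IsDiag} heven
  refine ⟨⟨fun a b => a ≠ b ∧ f s(a, b) = true, ?_, ?_⟩, ?_⟩
  · constructor; intro a b ⟨h1, h2⟩
    exact ⟨h1.symm, by rwa [Sym2.eq_swap]⟩
  · constructor; intro a ⟨h1, _⟩; exact h1 rfl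
  · ext a b
    simp only [mapGraph, SimpleGraph.compl_adj]
    constructor
    · rintro ⟨h1, h2⟩
      have hab : a ≠ b := fun h => h1 (by rw [h])
      refine ⟨hab, ?_⟩
      rintro ⟨-, h3⟩
      have key := hf s(α.symm a, α.symm b) (by simpa [Sym2.mk_isDiag_iff] using h1)
      have : σ s(α.symm a, α.symm b) = s(a, b) := by
        show s(α (α.symm a), α (α.symm b)) = s(a, b)
        simp
      rw [this, h3, h2] at key
      simp at key
    · rintro ⟨hab, h2⟩
      have h1 : α.symm a ≠ α.symm b := fun h => hab (by simpa using congrArg α h)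
      refine ⟨h1, ?_⟩
      have key := hf s(α.symm a, α.symm b) (by simpa [Sym2.mk_isDiag_iff] using h1)
      have hσe : σ s(α.symm a, α.symm b) = s(a, b) := by
        show s(α (α.symm a), α (α.symm b)) = s(a, b)
        simp
      rw [hσe] at key
      by_contra h3
      simp only [Bool.not_eq_true] at h3
      rw [h3] at key
      simp only [Bool.not_false] at key
      exact h2 ⟨hab, key⟩
end

section
/- If a permutation α of V = {1,...,n} has at most one fixed point and all its cycles of length at least 2 have length divisible by 4, then every cycle of the induced pair permutation α' on 2-element subsets of V has even length. -/
set_option linter.unusedVariables false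

open Equiv Equiv.Perm

lemma key_dvd {n : Nat} (α : Equiv.Perm (Fin n)) (x : Fin n) (hx : α x ≠ x)
    (k : Nat) (h : (α ^ k) x = x) : (α.cycleOf x).support.card ∣ k := by
  have hc := α.isCycle_cycleOf hx
  have h1 : ((α.cycleOf x) ^ k) x = x := by
    rw [Equiv.Perm.cycleOf_pow_apply_self]; exact h
  have h2 : (α.cycleOf x) ^ k = 1 :=
    hc.pow_eq_one_iff.2 ⟨x, by rwa [Equiv.Perm.cycleOf_apply_self], h1⟩
  rw [← hc.orderOf]
  exact orderOf_dvd_of_pow_eq_one h2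

lemma pairPerm_pow {n : Nat} (α : Equiv.Perm (Fin n)) (k : Nat) (e : Sym2 (Fin n)) :
    ((pairPerm α) ^ k) e = Sym2.map (α ^ k) e := by
  induction k with
  | zero => simp [Sym2.map_id']
  | succ k ih =>
      rw [pow_succ', Equiv.Perm.mul_apply, ih]
      show Sym2.map α _ = _
      rw [Sym2.map_map, pow_succ']
      rfl


/-- If `α` has at most one fixed point and all its cycles of length `≥ 2` have
length divisible by `4`, then every cycle of the induced pair permutation `α'`
on 2-element subsets has even length (the length of the cycle of `e` being the size
of its orbit under `α'`). -/
theorem stmt12 (n : Nat) (α : Equiv.Perm (Fin n))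
    (hfix : {x : Fin n | α x = x}.Subsingleton)
    (hcyc : ∀ x : Fin n, α x ≠ x → 4 ∣ (α.cycleOf x).support.card) :
    ∀ e : Sym2 (Fin n), ¬ e.IsDiag →
      2 ∣ Nat.card {f : Sym2 (Fin n) // (pairPerm α).SameCycle e f} := by
  intro e he
  induction e using Sym2.ind with
  | _ a b =>
    rw [Sym2.mk_isDiag_iff] at he
    -- core claim: no odd power fixes e
    have claim : ∀ k : Nat, Odd k → ((pairPerm α) ^ k) s(a, b) ≠ s(a, b) := by
      intro k hk hfix'
      rw [pairPerm_pow, Sym2.map_pair_eq, Sym2.eq_iff] at hfix'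
      rcases hfix' with ⟨ha, hb⟩ | ⟨hab, hba⟩
      · -- α^k a = a and α^k b = b
        have hone : α a ≠ a ∨ α b ≠ b := by
          by_contra hcon
          push_neg at hcon
          exact he (hfix hcon.1 hcon.2)
        have h4k : 4 ∣ k := by
          rcases hone with h | h
          · exact (hcyc a h).trans (key_dvd α a h k ha)
          · exact (hcyc b h).trans (key_dvd α b h k hb)
        have : 2 ∣ k := dvd_trans (by norm_num) h4k
        exact (Nat.not_even_iff_odd.mpr hk) (even_iff_two_dvd.mpr this)
      · -- α^k a = b and α^k b = a
        have haa : α a ≠ a := fun h => he (by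
          have : (α ^ k) a = a := by
            have : ∀ m, (α ^ m) a = a := fun m => by
              induction m with
              | zero => rfl
              | succ m ih => rw [pow_succ, Equiv.Perm.mul_apply, h, ih]
            exact this k
          rw [hab] at this; exact this.symm)
        have h2k : (α ^ (2 * k)) a = a := by
          rw [two_mul, pow_add, Equiv.Perm.mul_apply, hab, hba]
        have h4 : 4 ∣ 2 * k := (hcyc a haa).trans (key_dvd α a haa (2 * k) h2k)
        have : 2 ∣ k := by omega
        exact (Nat.not_even_iff_odd.mpr hk) (even_iff_two_dvd.mpr this)
    -- e is in the support of pairPerm α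
    set σ := pairPerm α with hσ
    have hmem : s(a, b) ∈ σ.support := by
      rw [Equiv.Perm.mem_support]
      have := claim 1 odd_one
      simpa using this
    classical
    -- card of the SameCycle set = support card of cycleOf
    have hset : {f : Sym2 (Fin n) | σ.SameCycle s(a,b) f} = ↑(σ.cycleOf s(a,b)).support := by
      ext f
      simp only [Set.mem_setOf_eq, Finset.mem_coe, Equiv.Perm.mem_support_cycleOf_iff,
        hmem, and_true]
    have hcard : Nat.card {f : Sym2 (Fin n) // σ.SameCycle s(a,b) f}
        = (σ.cycleOf s(a,b)).support.card := by
      have : Nat.card {f : Sym2 (Fin n) // σ.SameCycle s(a,b) f}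
          = Nat.card {f : Sym2 (Fin n) | σ.SameCycle s(a,b) f} := rfl
      rw [this, hset, Nat.card_coe_set_eq, Set.ncard_coe_finset]
    rw [hcard]
    -- the support card is orderOf cycleOf; show it's even via claim
    by_contra hodd
    have hoddc : Odd (σ.cycleOf s(a,b)).support.card := Nat.odd_iff.mpr (by omega)
    have hc := σ.isCycle_cycleOf (Equiv.Perm.mem_support.mp hmem)
    have hpow : (σ.cycleOf s(a,b)) ^ (σ.cycleOf s(a,b)).support.card = 1 := by
      rw [← hc.orderOf]; exact pow_orderOf_eq_one _
    have : (σ ^ (σ.cycleOf s(a,b)).support.card) s(a,b) = s(a,b) := by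
      rw [← Equiv.Perm.cycleOf_pow_apply_self, hpow]; rfl
    exact claim _ hoddc this
end
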